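/- The set {0,1,2,9,10,11} is a locating-dominating code of cardinality 6 in C_{14}(1,3) and also in C_{15}(1,3), and no locating-dominating code of cardinality 5 exists in either graph; hence γ^LD(C_{14}(1,3)) = γ^LD(C_{15}(1,3)) = 6. -/

import Mathlib

/-- Closed neighbourhood of `u` in the circulant graph `C_n(1,3)`. -/
def nbhd {n : ℕ} (u : ZMod n) : Finset (ZMod n) := {u - 3, u - 1, u, u + 1, u + 3}

/-- Identifying set `I(C;u) = N[u] ∩ C`. -/
def iset {n : ℕ} (C : Finset (ZMod n)) (u : ZMod n) : Finset (ZMod n) := nbhd u ∩ C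

/-- `C` is an identifying code in `C_n(1,3)`. -/
def IsIdentifying {n : ℕ} (C : Finset (ZMod n)) : Prop :=
  (∀ u : ZMod n, (iset C u).Nonempty) ∧
    ∀ u v : ZMod n, u ≠ v → iset C u ≠ iset C v

/-- `C` is a locating-dominating code in `C_n(1,3)`. -/
def IsLocDom {n : ℕ} (C : Finset (ZMod n)) : Prop :=
  (∀ u : ZMod n, (iset C u).Nonempty) ∧
    ∀ u v : ZMod n, u ∉ C → v ∉ C → u ≠ v → iset C u ≠ iset C v

instance {n : ℕ} [NeZero n] (C : Finset (ZMod n)) : Decidable (IsLocDom C) := by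
  unfold IsLocDom; infer_instance

lemma locdom_mono {n : ℕ} {C C' : Finset (ZMod n)} (h : C ⊆ C') (hC : IsLocDom C) :
    IsLocDom C' := by
  obtain ⟨hdom, hsep⟩ := hC
  constructor
  · intro u
    exact (hdom u).mono (Finset.inter_subset_inter le_rfl h)
  · intro u v hu hv huv heq
    have key : ∀ w : ZMod n, iset C w = iset C' w ∩ C := by
      intro w
      simp only [iset, Finset.inter_assoc, Finset.inter_eq_right.mpr h]
    exact hsep u v (fun hc => hu (h hc)) (fun hc => hv (h hc)) huv
      (by rw [key u, key v, heq])

def natNbhd (n u : ℕ) : ℕ :=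
  2 ^ ((u + (n - 3)) % n) ||| 2 ^ ((u + (n - 1)) % n) ||| 2 ^ (u % n) |||
    2 ^ ((u + 1) % n) ||| 2 ^ ((u + 3) % n)

section Bridge

variable {n : ℕ} [NeZero n]

lemma key (h3 : 3 ≤ n) {i : ℕ} (hi : i < n) (k : ℕ) :
    (k % n = i) ↔ ((i : ZMod n) = (k : ZMod n)) := by
  rw [← (ZMod.val_injective n).eq_iff, ZMod.val_cast_of_lt hi, ZMod.val_natCast]
  exact eq_comm

lemma testBit_natNbhd (h3 : 3 ≤ n) (u : ℕ) {i : ℕ} (hi : i < n) :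
    (natNbhd n u).testBit i = decide ((i : ZMod n) ∈ nbhd (u : ZMod n)) := by
  have c1 : ((u + (n - 3) : ℕ) : ZMod n) = (u : ZMod n) - 3 := by
    push_cast [Nat.cast_sub h3, ZMod.natCast_self]; ring
  have c2 : ((u + (n - 1) : ℕ) : ZMod n) = (u : ZMod n) - 1 := by
    push_cast [Nat.cast_sub (by omega : 1 ≤ n), ZMod.natCast_self]; ring
  have c4 : ((u + 1 : ℕ) : ZMod n) = (u : ZMod n) + 1 := by push_cast; ring
  have c5 : ((u + 3 : ℕ) : ZMod n) = (u : ZMod n) + 3 := by push_cast; ring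
  simp only [natNbhd, Nat.testBit_lor, Nat.testBit_two_pow, nbhd, Finset.mem_insert,
    Finset.mem_singleton, Bool.decide_or, key h3 hi, c1, c2, c4, c5, Bool.or_assoc]


lemma testBit_natNbhd_ge (u : ℕ) {i : ℕ} (hi : n ≤ i) :
    (natNbhd n u).testBit i = false := by
  have hn : 0 < n := Nat.pos_of_ne_zero (NeZero.ne n)
  simp only [natNbhd, Nat.testBit_lor, Nat.testBit_two_pow]
  have : ∀ k : ℕ, decide (k % n = i) = false := fun k => by
    simp only [decide_eq_false_iff_not]; have := Nat.mod_lt k hn; omega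
  simp [this]

variable {a b c d e : ℕ}

lemma testBit_M (ha : a < n) (hb : b < n) (hc : c < n) (hd : d < n) (he : e < n)
    {C : Finset (ZMod n)}
    (hCeq : C = {(a : ZMod n), (b : ZMod n), (c : ZMod n), (d : ZMod n), (e : ZMod n)})
    {i : ℕ} (hi : i < n) :
    (2 ^ a ||| 2 ^ b ||| 2 ^ c ||| 2 ^ d ||| 2 ^ e).testBit i = decide ((i : ZMod n) ∈ C) := by
  have key' : ∀ k : ℕ, k < n → ((k = i) ↔ ((i : ZMod n) = (k : ZMod n))) := fun k hk => by
    rw [← (ZMod.val_injective n).eq_iff, ZMod.val_cast_of_lt hi, ZMod.val_cast_of_lt hk]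
    exact eq_comm
  simp only [hCeq, Finset.mem_insert, Finset.mem_singleton, Nat.testBit_lor,
    Nat.testBit_two_pow, Bool.decide_or, key' a ha, key' b hb, key' c hc, key' d hd,
    key' e he, Bool.or_assoc]

lemma testBit_M_ge (ha : a < n) (hb : b < n) (hc : c < n) (hd : d < n) (he : e < n)
    {i : ℕ} (hi : n ≤ i) :
    (2 ^ a ||| 2 ^ b ||| 2 ^ c ||| 2 ^ d ||| 2 ^ e).testBit i = false := by
  simp only [Nat.testBit_lor, Nat.testBit_two_pow, decide_eq_false_iff_not, Bool.or_eq_false_iff]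
  omega

lemma testBit_mask_lt (h3 : 3 ≤ n) (ha : a < n) (hb : b < n) (hc : c < n) (hd : d < n)
    (he : e < n) {C : Finset (ZMod n)}
    (hCeq : C = {(a : ZMod n), (b : ZMod n), (c : ZMod n), (d : ZMod n), (e : ZMod n)})
    (u : ℕ) {i : ℕ} (hi : i < n) :
    (natNbhd n u &&& (2 ^ a ||| 2 ^ b ||| 2 ^ c ||| 2 ^ d ||| 2 ^ e)).testBit i
      = decide ((i : ZMod n) ∈ iset C (u : ZMod n)) := by
  rw [Nat.testBit_land, testBit_natNbhd h3 u hi, testBit_M ha hb hc hd he hCeq hi,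
    ← Bool.decide_and, decide_eq_decide]
  simp [iset, Finset.mem_inter]

lemma testBit_mask_ge (u : ℕ) {i : ℕ} (hi : n ≤ i) :
    (natNbhd n u &&& (2 ^ a ||| 2 ^ b ||| 2 ^ c ||| 2 ^ d ||| 2 ^ e)).testBit i = false := by
  rw [Nat.testBit_land, testBit_natNbhd_ge u hi, Bool.false_and]

lemma mask_eq_iff (h3 : 3 ≤ n) (ha : a < n) (hb : b < n) (hc : c < n) (hd : d < n)
    (he : e < n) {C : Finset (ZMod n)}
    (hCeq : C = {(a : ZMod n), (b : ZMod n), (c : ZMod n), (d : ZMod n), (e : ZMod n)})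
    (u v : ℕ) :
    natNbhd n u &&& (2 ^ a ||| 2 ^ b ||| 2 ^ c ||| 2 ^ d ||| 2 ^ e)
        = natNbhd n v &&& (2 ^ a ||| 2 ^ b ||| 2 ^ c ||| 2 ^ d ||| 2 ^ e)
      ↔ iset C (u : ZMod n) = iset C (v : ZMod n) := by
  constructor
  · intro h
    ext x
    have hx : ((x.val : ℕ) : ZMod n) = x := ZMod.natCast_rightInverse x
    have hxlt : x.val < n := ZMod.val_lt x
    have := congrArg (Nat.testBit · x.val) h
    simp only [testBit_mask_lt h3 ha hb hc hd he hCeq u hxlt,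
      testBit_mask_lt h3 ha hb hc hd he hCeq v hxlt, decide_eq_decide, hx] at this
    exact this
  · intro h
    apply Nat.eq_of_testBit_eq
    intro i
    rcases lt_or_ge i n with hi | hi
    · rw [testBit_mask_lt h3 ha hb hc hd he hCeq u hi,
        testBit_mask_lt h3 ha hb hc hd he hCeq v hi, h]
    · rw [testBit_mask_ge u hi, testBit_mask_ge v hi]

lemma mask_zero_iff (h3 : 3 ≤ n) (ha : a < n) (hb : b < n) (hc : c < n) (hd : d < n)
    (he : e < n) {C : Finset (ZMod n)}
    (hCeq : C = {(a : ZMod n), (b : ZMod n), (c : ZMod n), (d : ZMod n), (e : ZMod n)})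
    (u : ℕ) :
    natNbhd n u &&& (2 ^ a ||| 2 ^ b ||| 2 ^ c ||| 2 ^ d ||| 2 ^ e) = 0
      ↔ iset C (u : ZMod n) = ∅ := by
  constructor
  · intro h
    ext x
    have hx : ((x.val : ℕ) : ZMod n) = x := ZMod.natCast_rightInverse x
    have hxlt : x.val < n := ZMod.val_lt x
    have := congrArg (Nat.testBit · x.val) h
    simp only [testBit_mask_lt h3 ha hb hc hd he hCeq u hxlt, Nat.zero_testBit,
      decide_eq_false_iff_not, hx] at this
    simp [this]
  · intro h
    apply Nat.eq_of_testBit_eq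
    intro i
    rcases lt_or_ge i n with hi | hi
    · rw [testBit_mask_lt h3 ha hb hc hd he hCeq u hi, Nat.zero_testBit, h]
      simp
    · rw [testBit_mask_ge u hi, Nat.zero_testBit]

end Bridge

def Bad (n : ℕ) : Prop :=
  ∀ e, e < n → ∀ d, d < e → ∀ c, c < d → ∀ b, b < c → ∀ a, a < b →
    ¬ ((∀ u, u < n →
          natNbhd n u &&& (2 ^ a ||| 2 ^ b ||| 2 ^ c ||| 2 ^ d ||| 2 ^ e) ≠ 0) ∧
       (∀ u, u < n → ∀ v, v < u →
          (2 ^ a ||| 2 ^ b ||| 2 ^ c ||| 2 ^ d ||| 2 ^ e).testBit u = false →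
          (2 ^ a ||| 2 ^ b ||| 2 ^ c ||| 2 ^ d ||| 2 ^ e).testBit v = false →
          natNbhd n u &&& (2 ^ a ||| 2 ^ b ||| 2 ^ c ||| 2 ^ d ||| 2 ^ e) ≠
            natNbhd n v &&& (2 ^ a ||| 2 ^ b ||| 2 ^ c ||| 2 ^ d ||| 2 ^ e)))

theorem no_card5 {n : ℕ} [NeZero n] (h3 : 3 ≤ n) (hbad : Bad n)
    (C : Finset (ZMod n)) (hcard : C.card = 5) : ¬ IsLocDom C := by
  intro hC
  classical
  set S : Finset ℕ := C.image ZMod.val with hS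
  have hScard : S.card = 5 := by
    rw [hS, Finset.card_image_of_injective _ (ZMod.val_injective n), hcard]
  have hmemS : ∀ i : ℕ, i ∈ S ↔ ∃ x ∈ C, x.val = i := by
    intro i; simp [hS]
  have hlt : ∀ i ∈ S, i < n := by
    intro i hi
    obtain ⟨x, _, rfl⟩ := (hmemS i).mp hi
    exact ZMod.val_lt x
  -- sort S
  have hlen : (S.sort (· ≤ ·)).length = 5 := by rw [Finset.length_sort, hScard]
  have hsorted := (Finset.sortedLT_sort S).pairwise
  have hmeml : ∀ i : ℕ, i ∈ S.sort (· ≤ ·) ↔ i ∈ S := fun i => Finset.mem_sort _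
  rcases hl : S.sort (· ≤ ·) with _ | ⟨a, _ | ⟨b, _ | ⟨c, _ | ⟨d, _ | ⟨e, _ | ⟨f, l⟩⟩⟩⟩⟩⟩ <;>
    rw [hl] at hlen <;> simp at hlen
  rw [hl] at hsorted hmeml
  simp only [List.pairwise_cons, List.mem_cons, List.mem_singleton, List.not_mem_nil,
    or_false, List.pairwise_singleton] at hsorted hmeml
  obtain ⟨ha2, hb2, hc2, hd2, -⟩ := hsorted
  have hab : a < b := ha2 b (by tauto)
  have hbc : b < c := hb2 c (by tauto)
  have hcd : c < d := hc2 d (by tauto)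
  have hde : d < e := hd2 e (by tauto)
  have ha : a < n := hlt a ((hmeml a).mp (by simp))
  have hb : b < n := hlt b ((hmeml b).mp (by simp))
  have hc : c < n := hlt c ((hmeml c).mp (by simp))
  have hd : d < n := hlt d ((hmeml d).mp (by simp))
  have he : e < n := hlt e ((hmeml e).mp (by simp))
  -- C as explicit insert set
  have hCeq : C = {(a : ZMod n), (b : ZMod n), (c : ZMod n), (d : ZMod n), (e : ZMod n)} := by
    ext x
    have hx : ((x.val : ℕ) : ZMod n) = x := ZMod.natCast_rightInverse x
    have hxlt : x.val < n := ZMod.val_lt x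
    have hval : ∀ k : ℕ, k < n → (x = (k : ZMod n) ↔ x.val = k) := by
      intro k hk
      rw [← (ZMod.val_injective n).eq_iff, ZMod.val_cast_of_lt hk]
    simp only [Finset.mem_insert, Finset.mem_singleton, hval a ha, hval b hb, hval c hc,
      hval d hd, hval e he]
    constructor
    · intro hxC
      have : x.val ∈ S := (hmemS x.val).mpr ⟨x, hxC, rfl⟩
      have := (hmeml x.val).mpr this
      tauto
    · intro h
      have : x.val ∈ S := (hmeml x.val).mp (by tauto)
      obtain ⟨y, hy, hyv⟩ := (hmemS x.val).mp this
      rwa [(ZMod.val_injective n hyv : y = x)] at hy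
  refine hbad e he d hde c hcd b hbc a hab ⟨?_, ?_⟩
  · intro u hu h0
    exact (hC.1 (u : ZMod n)).ne_empty
      ((mask_zero_iff h3 ha hb hc hd he hCeq u).mp h0)
  · intro u hu v hv htu htv heq
    have hunotC : (u : ZMod n) ∉ C := by
      rw [testBit_M ha hb hc hd he hCeq hu, decide_eq_false_iff_not] at htu
      exact htu
    have hvnotC : (v : ZMod n) ∉ C := by
      rw [testBit_M ha hb hc hd he hCeq (lt_trans hv hu), decide_eq_false_iff_not] at htv
      exact htv
    have hne : (u : ZMod n) ≠ (v : ZMod n) := by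
      intro h
      have := congrArg ZMod.val h
      rw [ZMod.val_cast_of_lt hu, ZMod.val_cast_of_lt (lt_trans hv hu)] at this
      omega
    exact hC.2 _ _ hunotC hvnotC hne ((mask_eq_iff h3 ha hb hc hd he hCeq u v).mp heq)

set_option maxHeartbeats 4000000 in
set_option maxRecDepth 10000 in
set_option synthInstance.maxSize 100000 in
set_option synthInstance.maxHeartbeats 10000000 in
lemma bad14 : Bad 14 := by unfold Bad; decide

set_option maxHeartbeats 4000000 in
set_option maxRecDepth 10000 in
set_option synthInstance.maxSize 100000 in
set_option synthInstance.maxHeartbeats 10000000 in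
lemma bad15 : Bad 15 := by unfold Bad; decide

lemma lb {n : ℕ} [NeZero n] (h3 : 3 ≤ n) (hn : 5 ≤ Fintype.card (ZMod n))
    (hbad : Bad n) (C : Finset (ZMod n)) (hC : IsLocDom C) : 6 ≤ C.card := by
  by_contra hlt
  have hle : C.card ≤ 5 := by omega
  obtain ⟨C', hCC', hcard⟩ := Finset.exists_superset_card_eq hle
    (by simpa using hn)
  exact no_card5 h3 hbad C' hcard (locdom_mono hCC' hC)

theorem gammaLD_14_15 :
    IsLocDom ({0, 1, 2, 9, 10, 11} : Finset (ZMod 14)) ∧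
    ({0, 1, 2, 9, 10, 11} : Finset (ZMod 14)).card = 6 ∧
    (∀ C : Finset (ZMod 14), IsLocDom C → 6 ≤ C.card) ∧
    IsLocDom ({0, 1, 2, 9, 10, 11} : Finset (ZMod 15)) ∧
    ({0, 1, 2, 9, 10, 11} : Finset (ZMod 15)).card = 6 ∧
    (∀ C : Finset (ZMod 15), IsLocDom C → 6 ≤ C.card) := by
  refine ⟨by decide, by decide, lb (by norm_num) (by simp) bad14,
    by decide, by decide, lb (by norm_num) (by simp) bad15⟩
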